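/- Let A and B be Banach algebras, J ⊆ A a closed two-sided ideal with a bounded approximate identity (e_γ), B unital and a dual Banach algebra, and ψ : A → B a continuous algebra homomorphism. Suppose p ∈ B is an idempotent which is the weak* limit along an ultrafilter extending the order filter of (ψ(e_γ)). Then p ψ(c) = ψ(c) = ψ(c) p for all c ∈ J, p ψ(a) p = p ψ(a) = ψ(a) p for all a ∈ A, and the map θ : A → B, θ(a) = (1 − p) ψ(a) (1 − p), is a continuous algebra homomorphism vanishing on J. -/

import Mathlib

open Filter NormedSpace

/-- Let `A` be a Banach algebra, `J` a closed two-sided ideal of `A` with a bounded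
approximate identity `(e_γ)`, and `B` a unital dual Banach algebra, realised as the dual
of a Banach space `E` via an isometric isomorphism `ι` for which multiplication on `B` is
separately weak*-continuous. Let `ψ : A → B` be a continuous algebra homomorphism, and let
`p ∈ B` be an idempotent which is the weak* limit of `(ψ(e_γ))` along an ultrafilter
extending the order filter. Then `p ψ(c) = ψ(c) = ψ(c) p` for `c ∈ J`,
`p ψ(a) p = p ψ(a) = ψ(a) p` for `a ∈ A`, and `θ : a ↦ (1 - p) ψ(a) (1 - p)` is a
continuous algebra homomorphism vanishing on `J`. -/
theorem corner_hom_of_bai_ideal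
    {A B E : Type*}
    [NonUnitalNormedRing A] [NormedSpace ℂ A]
    [IsScalarTower ℂ A A] [SMulCommClass ℂ A A] [CompleteSpace A]
    [NormedRing B] [NormedAlgebra ℂ B] [CompleteSpace B]
    [NormedAddCommGroup E] [NormedSpace ℂ E] [CompleteSpace E]
    -- `B` is a dual Banach algebra with predual `E`:
    (ι : B ≃ₗᵢ[ℂ] StrongDual ℂ E)
    (hmul_left : ∀ b : B, Continuous fun φ : WeakDual ℂ E =>
      StrongDual.toWeakDual (ι (b * ι.symm (StrongDual.toWeakDual.symm φ))))
    (hmul_right : ∀ b : B, Continuous fun φ : WeakDual ℂ E =>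
      StrongDual.toWeakDual (ι (ι.symm (StrongDual.toWeakDual.symm φ) * b)))
    -- `J` is a closed two-sided ideal of `A`:
    (J : TwoSidedIdeal A) (hJclosed : IsClosed (J : Set A))
    -- `(e γ)` is a bounded approximate identity for `J`:
    {Γ : Type*} [Preorder Γ] [IsDirected Γ (· ≤ ·)] [Nonempty Γ]
    (e : Γ → A) (heJ : ∀ γ, e γ ∈ J) (hebd : ∃ C : ℝ, ∀ γ, ‖e γ‖ ≤ C)
    (hbai : ∀ c ∈ J, Tendsto (fun γ => e γ * c) atTop (nhds c) ∧
      Tendsto (fun γ => c * e γ) atTop (nhds c))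
    -- `ψ` is a continuous algebra homomorphism:
    (ψ : A →ₙₐ[ℂ] B) (hψcont : Continuous ψ)
    -- `p` is an idempotent, the weak* limit of `ψ (e γ)` along an ultrafilter `U`
    -- extending the order filter:
    (U : Ultrafilter Γ) (hU : (atTop : Filter Γ) ≤ (U : Filter Γ))
    (p : B) (hp : IsIdempotentElem p)
    (hplim : ∀ x : E, Tendsto (fun γ => ι (ψ (e γ)) x) (U : Filter Γ) (nhds (ι p x))) :
    (∀ c ∈ J, p * ψ c = ψ c ∧ ψ c * p = ψ c) ∧
    (∀ a : A, p * ψ a * p = p * ψ a ∧ p * ψ a = ψ a * p) ∧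
    (Continuous fun a : A => (1 - p) * ψ a * (1 - p)) ∧
    (∀ a a' : A, (1 - p) * ψ (a * a') * (1 - p)
        = ((1 - p) * ψ a * (1 - p)) * ((1 - p) * ψ a' * (1 - p))) ∧
    (∀ a a' : A, (1 - p) * ψ (a + a') * (1 - p)
        = (1 - p) * ψ a * (1 - p) + (1 - p) * ψ a' * (1 - p)) ∧
    (∀ (c : ℂ) (a : A), (1 - p) * ψ (c • a) * (1 - p) = c • ((1 - p) * ψ a * (1 - p))) ∧
    (∀ c ∈ J, (1 - p) * ψ c * (1 - p) = 0) := by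
  classical
  set W : B → WeakDual ℂ E := fun b => StrongDual.toWeakDual (ι b) with hWdef
  have hWinj : Function.Injective W := by
    intro x y h
    exact ι.injective ((StrongDual.toWeakDual_inj _ _).mp h)
  haveI : (atTop : Filter Γ).NeBot := atTop_neBot
  -- weak* convergence of ψ (e γ) to p, along atTop
  have hWlim : Tendsto (fun γ => W (ψ (e γ))) atTop (nhds (W p)) := by
    refine Tendsto.mono_left ?_ hU
    rw [tendsto_iff_forall_eval_tendsto_topDualPairing]
    intro x
    exact hplim x
  have hWcont : Continuous W :=
    Dual.toWeakDual_continuous.comp ι.continuous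
  have norm_to_weak : ∀ {f : Γ → B} {L : B}, Tendsto f atTop (nhds L) →
      Tendsto (fun γ => W (f γ)) atTop (nhds (W L)) := by
    intro f L h
    exact (hWcont.tendsto L).comp h
  -- separate weak*-continuity of multiplication, transported to W
  have key_right : ∀ b : B, ∀ {f : Γ → B} {L : B},
      Tendsto (fun γ => W (f γ)) atTop (nhds (W L)) →
      Tendsto (fun γ => W (f γ * b)) atTop (nhds (W (L * b))) := by
    intro b f L h
    have hc := ((hmul_right b).tendsto (W L)).comp h
    have heq : ∀ x : B,
        StrongDual.toWeakDual (ι (ι.symm (StrongDual.toWeakDual.symm (W x)) * b)) = W (x * b) := by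
      intro x
      simp only [hWdef, LinearEquiv.symm_apply_apply, LinearIsometryEquiv.symm_apply_apply]
    simpa only [Function.comp_def, heq] using hc
  have key_left : ∀ b : B, ∀ {f : Γ → B} {L : B},
      Tendsto (fun γ => W (f γ)) atTop (nhds (W L)) →
      Tendsto (fun γ => W (b * f γ)) atTop (nhds (W (b * L))) := by
    intro b f L h
    have hc := ((hmul_left b).tendsto (W L)).comp h
    have heq : ∀ x : B,
        StrongDual.toWeakDual (ι (b * ι.symm (StrongDual.toWeakDual.symm (W x)))) = W (b * x) := by
      intro x
      simp only [hWdef, LinearEquiv.symm_apply_apply, LinearIsometryEquiv.symm_apply_apply]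
    simpa only [Function.comp_def, heq] using hc
  -- step 1 : p ψ c = ψ c = ψ c p for c ∈ J
  have step1 : ∀ c ∈ J, p * ψ c = ψ c ∧ ψ c * p = ψ c := by
    intro c hc
    constructor
    · have h1 : Tendsto (fun γ => ψ (e γ * c)) atTop (nhds (ψ c)) :=
        (hψcont.tendsto c).comp (hbai c hc).1
      have h1' := norm_to_weak h1
      have h2 := key_right (ψ c) hWlim
      simp only [map_mul] at h1'
      exact hWinj (tendsto_nhds_unique h2 h1')
    · have h1 : Tendsto (fun γ => ψ (c * e γ)) atTop (nhds (ψ c)) :=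
        (hψcont.tendsto c).comp (hbai c hc).2
      have h1' := norm_to_weak h1
      have h2 := key_left (ψ c) hWlim
      simp only [map_mul] at h1'
      exact hWinj (tendsto_nhds_unique h2 h1')
  -- step 2 : p ψ a p = p ψ a = ψ a p for all a
  have step2 : ∀ a : A, p * ψ a * p = p * ψ a ∧ p * ψ a = ψ a * p := by
    intro a
    have hr : Tendsto (fun γ => W (ψ (e γ) * ψ a)) atTop (nhds (W (p * ψ a))) :=
      key_right (ψ a) hWlim
    have hpap : p * ψ a * p = p * ψ a := by
      have hr' := key_right p hr
      have heq : ∀ γ, ψ (e γ) * ψ a * p = ψ (e γ) * ψ a := by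
        intro γ
        have := (step1 (e γ * a) (J.mul_mem_right _ _ (heJ γ))).2
        simpa [map_mul] using this
      simp only [heq] at hr'
      exact hWinj (tendsto_nhds_unique hr' hr)
    have hl : Tendsto (fun γ => W (ψ a * ψ (e γ))) atTop (nhds (W (ψ a * p))) :=
      key_left (ψ a) hWlim
    have hpap' : p * (ψ a * p) = ψ a * p := by
      have hl' := key_left p hl
      have heq : ∀ γ, p * (ψ a * ψ (e γ)) = ψ a * ψ (e γ) := by
        intro γ
        have := (step1 (a * e γ) (J.mul_mem_left _ _ (heJ γ))).1
        simpa [map_mul] using this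
      simp only [heq] at hl'
      exact hWinj (tendsto_nhds_unique hl' hl)
    refine ⟨hpap, ?_⟩
    rw [← hpap, mul_assoc, hpap']
  -- derived algebraic facts
  have hcomm : ∀ a : A, p * ψ a = ψ a * p := fun a => (step2 a).2
  have hqc : ∀ a : A, (1 - p) * ψ a = ψ a * (1 - p) := by
    intro a
    simp only [sub_mul, mul_sub, one_mul, mul_one, hcomm a]
  have hq : (1 - p) * (1 - p) = 1 - p := by
    simp only [sub_mul, mul_sub, one_mul, mul_one, hp.eq]
    abel
  have hzero : ∀ a : A, (1 - p) * ψ a * (1 - p) = (1 - p) * ψ a := by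
    intro a
    rw [hqc a, mul_assoc, hq, ← hqc a]
  refine ⟨step1, step2, ?_, ?_, ?_, ?_, ?_⟩
  · exact (continuous_const.mul hψcont).mul continuous_const
  · intro a a'
    rw [hzero a, hzero a', hzero (a * a'), map_mul]
    calc (1 - p) * (ψ a * ψ a')
        = (1 - p) * ψ a * ψ a' := (mul_assoc _ _ _).symm
      _ = ψ a * (1 - p) * ψ a' := by rw [hqc a]
      _ = ψ a * ((1 - p) * ψ a') := mul_assoc _ _ _
      _ = ψ a * ((1 - p) * ((1 - p) * ψ a')) := by rw [← mul_assoc (1-p) (1-p), hq]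
      _ = ψ a * (1 - p) * ((1 - p) * ψ a') := (mul_assoc _ _ _).symm
      _ = (1 - p) * ψ a * ((1 - p) * ψ a') := by rw [← hqc a]
  · intro a a'
    simp only [map_add, mul_add, add_mul]
  · intro c a
    simp only [map_smul, mul_smul_comm, smul_mul_assoc]
  · intro c hc
    have h0 : (1 - p) * ψ c = 0 := by
      rw [sub_mul, one_mul, (step1 c hc).1, sub_self]
    rw [h0, zero_mul]
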